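/- Let n, m ≥ 1 and let J_1, …, J_ℓ be a partition of {1,...,m} into contiguous intervals with J_k preceding J_{k+1}; write a_k = min J_k, b_k = max J_k, m_k = |J_k|. Let A ∈ [0,1]^{n×m} have nondecreasing rows and nondecreasing columns. Suppose τ ≥ 0 satisfies Σ_{i=1}^n (A_{i,b_k} − A_{i,a_k}) ≤ τ for each k, and there exist positive reals ρ, ρ_1, …, ρ_ℓ and a permutation π of {1,...,n} such that for every i: Σ_{j=1}^m |A_{π(i),j} − A_{i,j}| ≤ ρ and Σ_{j∈J_k} |A_{π(i),j} − A_{i,j}| ≤ ρ_k for each k. Then Σ_{i=1}^n Σ_{j=1}^m (A_{π(i),j} − A_{i,j})² ≤ 2τ·Σ_{k=1}^ℓ ρ_k + n·ρ·max_{k∈[ℓ]} (ρ_k/m_k). -/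

import Mathlib

theorem stmt_5 (n m ℓ : ℕ) (hn : 0 < n) (hm : 0 < m) (hℓ : 0 < ℓ)
    (J : Fin ℓ → Finset (Fin m)) (hne : ∀ k, (J k).Nonempty)
    (hcover : ∀ j : Fin m, ∃ k, j ∈ J k)
    (hcontig : ∀ k, ∀ j₁ ∈ J k, ∀ j₂ ∈ J k, ∀ j : Fin m, j₁ ≤ j → j ≤ j₂ → j ∈ J k)
    (horder : ∀ k k' : Fin ℓ, k < k' → ∀ j ∈ J k, ∀ j' ∈ J k', j < j')
    (A : Fin n → Fin m → ℝ)
    (hA01 : ∀ i j, A i j ∈ Set.Icc (0:ℝ) 1)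
    (hrow : ∀ i, Monotone (A i))
    (hcol : ∀ j, Monotone fun i => A i j)
    (τ : ℝ) (hτ : 0 ≤ τ)
    (hτbd : ∀ k, ∑ i, (A i ((J k).max' (hne k)) - A i ((J k).min' (hne k))) ≤ τ)
    (ρ : ℝ) (ρk : Fin ℓ → ℝ) (hρ : 0 < ρ) (hρk : ∀ k, 0 < ρk k)
    (π : Equiv.Perm (Fin n))
    (hrowbd : ∀ i, ∑ j, |A (π i) j - A i j| ≤ ρ)
    (hblockbd : ∀ i k, ∑ j ∈ J k, |A (π i) j - A i j| ≤ ρk k) :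
    haveI : Nonempty (Fin ℓ) := Fin.pos_iff_nonempty.mp hℓ
    ∑ i, ∑ j, (A (π i) j - A i j) ^ 2 ≤
      2 * τ * ∑ k, ρk k +
        n * ρ * Finset.univ.sup' Finset.univ_nonempty (fun k => ρk k / (J k).card) := by
  haveI : Nonempty (Fin ℓ) := Fin.pos_iff_nonempty.mp hℓ
  set S := Finset.univ.sup' Finset.univ_nonempty (fun k => ρk k / (J k).card) with hSdef
  obtain ⟨g, hgdef⟩ : ∃ g : Fin n → Fin ℓ → ℝ,
      ∀ i k, g i k = A i ((J k).max' (hne k)) - A i ((J k).min' (hne k)) :=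
    ⟨_, fun _ _ => rfl⟩
  have hg0 : ∀ i k, 0 ≤ g i k := by
    intro i k
    have h : (J k).min' (hne k) ≤ (J k).max' (hne k) :=
      (J k).min'_le _ ((J k).max'_mem (hne k))
    rw [hgdef, sub_nonneg]
    exact hrow i h
  have hcardpos : ∀ k, (0:ℝ) < (J k).card := by
    intro k
    exact_mod_cast Finset.card_pos.mpr (hne k)
  -- sup' bounds
  have hSle : ∀ k, ρk k / (J k).card ≤ S :=
    fun k => Finset.le_sup' (fun k => ρk k / (J k).card) (Finset.mem_univ k)
  have hS0 : 0 ≤ S := by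
    obtain ⟨k⟩ := ‹Nonempty (Fin ℓ)›
    exact le_trans (le_of_lt (div_pos (hρk k) (hcardpos k))) (hSle k)
  -- disjointness and sum splitting
  have hdisj : ∀ k ∈ (Finset.univ : Finset (Fin ℓ)), ∀ k' ∈ (Finset.univ : Finset (Fin ℓ)),
      k ≠ k' → Disjoint (J k) (J k') := by
    intro k _ k' _ hkk'
    rw [Finset.disjoint_left]
    intro j hj hj'
    rcases hkk'.lt_or_gt with h | h
    · exact absurd (horder k k' h j hj j hj') (lt_irrefl j)
    · exact absurd (horder k' k h j hj' j hj) (lt_irrefl j)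
  have huniv : (Finset.univ : Finset (Fin m)) = Finset.univ.biUnion J := by
    ext j
    simpa using hcover j
  have hsplit : ∀ f : Fin m → ℝ, ∑ j, f j = ∑ k, ∑ j ∈ J k, f j := by
    intro f
    rw [huniv, Finset.sum_biUnion hdisj]
  -- key pointwise bound
  have key : ∀ i k, ∀ j ∈ J k,
      |A (π i) j - A i j| ≤ ρk k / (J k).card + g i k + g (π i) k := by
    intro i k j hj
    obtain ⟨j₀, hj₀, hj₀le⟩ : ∃ j₀ ∈ J k, |A (π i) j₀ - A i j₀| ≤ ρk k / (J k).card := by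
      by_contra hcon
      push_neg at hcon
      have hlt : ∑ _j ∈ J k, (ρk k / (J k).card) < ∑ j ∈ J k, |A (π i) j - A i j| :=
        Finset.sum_lt_sum_of_nonempty (hne k) (fun j hj => hcon j hj)
      rw [Finset.sum_const, nsmul_eq_mul,
        mul_div_cancel₀ _ (ne_of_gt (hcardpos k))] at hlt
      exact absurd (hblockbd i k) (not_le.mpr hlt)
    have osc : ∀ σ : Fin n, |A σ j - A σ j₀| ≤ g σ k := by
      intro σ
      have h1 : A σ ((J k).min' (hne k)) ≤ A σ j := hrow σ ((J k).min'_le j hj)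
      have h2 : A σ j ≤ A σ ((J k).max' (hne k)) := hrow σ ((J k).le_max' j hj)
      have h3 : A σ ((J k).min' (hne k)) ≤ A σ j₀ := hrow σ ((J k).min'_le j₀ hj₀)
      have h4 : A σ j₀ ≤ A σ ((J k).max' (hne k)) := hrow σ ((J k).le_max' j₀ hj₀)
      rw [abs_sub_le_iff, hgdef]
      constructor <;> linarith
    obtain ⟨o1a, o1b⟩ := abs_le.mp (osc (π i))
    obtain ⟨o2a, o2b⟩ := abs_le.mp (osc i)
    obtain ⟨o3a, o3b⟩ := abs_le.mp hj₀le
    rw [abs_le]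
    constructor
    · linarith
    · linarith
  -- per-block bound
  have block : ∀ i k, ∑ j ∈ J k, (A (π i) j - A i j) ^ 2 ≤
      (ρk k / (J k).card) * (∑ j ∈ J k, |A (π i) j - A i j|) + (g i k + g (π i) k) * ρk k := by
    intro i k
    have h1 : ∑ j ∈ J k, (A (π i) j - A i j) ^ 2 ≤
        ∑ j ∈ J k, (ρk k / (J k).card + g i k + g (π i) k) * |A (π i) j - A i j| := by
      apply Finset.sum_le_sum
      intro j hj
      have hsq : (A (π i) j - A i j) ^ 2 = |A (π i) j - A i j| * |A (π i) j - A i j| := by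
        rw [abs_mul_abs_self]; ring
      rw [hsq]
      exact mul_le_mul_of_nonneg_right (key i k j hj) (abs_nonneg _)
    rw [← Finset.mul_sum] at h1
    refine h1.trans ?_
    have hsum0 : 0 ≤ ∑ j ∈ J k, |A (π i) j - A i j| :=
      Finset.sum_nonneg fun j _ => abs_nonneg _
    have hsumρ : ∑ j ∈ J k, |A (π i) j - A i j| ≤ ρk k := hblockbd i k
    have hmul := mul_le_mul_of_nonneg_left hsumρ (add_nonneg (hg0 i k) (hg0 (π i) k))
    calc (ρk k / (J k).card + g i k + g (π i) k) * (∑ j ∈ J k, |A (π i) j - A i j|)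
        = (ρk k / (J k).card) * (∑ j ∈ J k, |A (π i) j - A i j|)
          + (g i k + g (π i) k) * (∑ j ∈ J k, |A (π i) j - A i j|) := by ring
      _ ≤ _ := add_le_add (le_refl _) hmul
  -- assemble
  have main : ∑ i, ∑ j, (A (π i) j - A i j) ^ 2 ≤
      ∑ i, ∑ k, ((ρk k / (J k).card) * (∑ j ∈ J k, |A (π i) j - A i j|)
        + (g i k + g (π i) k) * ρk k) := by
    calc ∑ i, ∑ j, (A (π i) j - A i j) ^ 2
        = ∑ i, ∑ k, ∑ j ∈ J k, (A (π i) j - A i j) ^ 2 :=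
          Finset.sum_congr rfl fun i _ => hsplit _
      _ ≤ _ :=
          Finset.sum_le_sum fun i _ => Finset.sum_le_sum fun k _ => block i k
  -- first part
  have T1 : ∑ i, ∑ k, (ρk k / (J k).card) * (∑ j ∈ J k, |A (π i) j - A i j|)
      ≤ n * ρ * S := by
    have step : ∀ i : Fin n, ∑ k, (ρk k / (J k).card) * (∑ j ∈ J k, |A (π i) j - A i j|)
        ≤ S * ρ := by
      intro i
      have h1 : ∑ k, (ρk k / (J k).card) * (∑ j ∈ J k, |A (π i) j - A i j|)
          ≤ ∑ k, S * (∑ j ∈ J k, |A (π i) j - A i j|) := by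
        refine Finset.sum_le_sum fun k _ => ?_
        exact mul_le_mul_of_nonneg_right (hSle k)
          (Finset.sum_nonneg fun j _ => abs_nonneg _)
      rw [← Finset.mul_sum] at h1
      refine h1.trans ?_
      have h2 : ∑ k, ∑ j ∈ J k, |A (π i) j - A i j| = ∑ j, |A (π i) j - A i j| :=
        (hsplit _).symm
      rw [h2]
      exact mul_le_mul_of_nonneg_left (hrowbd i) hS0
    calc ∑ i, ∑ k, (ρk k / (J k).card) * (∑ j ∈ J k, |A (π i) j - A i j|)
        ≤ ∑ _i : Fin n, S * ρ := Finset.sum_le_sum fun i _ => step i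
      _ = n * ρ * S := by rw [Finset.sum_const]; simp [Finset.card_univ]; ring
  -- second part
  have T2 : ∑ i, ∑ k, (g i k + g (π i) k) * ρk k ≤ 2 * τ * ∑ k, ρk k := by
    rw [Finset.sum_comm]
    have step : ∀ k : Fin ℓ, ∑ i, (g i k + g (π i) k) * ρk k ≤ 2 * τ * ρk k := by
      intro k
      have hperm : ∑ i, g (π i) k = ∑ i, g i k := Equiv.sum_comp π (fun i => g i k)
      have hgτ' : ∑ i, g i k = ∑ i, (A i ((J k).max' (hne k)) - A i ((J k).min' (hne k))) :=
        Finset.sum_congr rfl fun i _ => hgdef i k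
      have hsum : ∑ i, (g i k + g (π i) k) = 2 * ∑ i, g i k := by
        rw [Finset.sum_add_distrib, hperm]; ring
      have hgτ : ∑ i, g i k ≤ τ := hgτ'.trans_le (hτbd k)
      calc ∑ i, (g i k + g (π i) k) * ρk k
          = (∑ i, (g i k + g (π i) k)) * ρk k := by rw [Finset.sum_mul]
        _ = (2 * ∑ i, g i k) * ρk k := by rw [hsum]
        _ ≤ 2 * τ * ρk k := by
            have := mul_le_mul_of_nonneg_right hgτ (le_of_lt (hρk k))
            nlinarith [this]
    calc ∑ k, ∑ i, (g i k + g (π i) k) * ρk k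
        ≤ ∑ k, 2 * τ * ρk k := Finset.sum_le_sum fun k _ => step k
      _ = 2 * τ * ∑ k, ρk k := by rw [Finset.mul_sum]
  have final : ∑ i, ∑ k, ((ρk k / (J k).card) * (∑ j ∈ J k, |A (π i) j - A i j|)
      + (g i k + g (π i) k) * ρk k) ≤ 2 * τ * ∑ k, ρk k + n * ρ * S := by
    have := add_le_add T1 T2
    calc ∑ i, ∑ k, ((ρk k / (J k).card) * (∑ j ∈ J k, |A (π i) j - A i j|)
        + (g i k + g (π i) k) * ρk k)
        = (∑ i, ∑ k, (ρk k / (J k).card) * (∑ j ∈ J k, |A (π i) j - A i j|))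
          + ∑ i, ∑ k, (g i k + g (π i) k) * ρk k := by
          rw [← Finset.sum_add_distrib]
          exact Finset.sum_congr rfl fun i _ => Finset.sum_add_distrib
      _ ≤ 2 * τ * ∑ k, ρk k + n * ρ * S := by linarith
  exact main.trans final
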